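/- For integers N_1, …, N_k ≥ 2, the identity Σ_{j=1}^k Σ_{i=1}^{φ(N_j)} (ψ(1) − ψ(r_{i,j}/N_j)) = log(C_N) holds, where ψ is the digamma function, the r_{i,j} run over integers in {1,…,N_j} coprime to N_j, and C_N = ∏_{j=1}^k N_j^{φ(N_j)} ∏_{p | N_j} p^{φ(N_j)/(p−1)}. -/

import Mathlib

open Real Filter Finset Topology ArithmeticFunction
open scoped ArithmeticFunction.Moebius


/-- The digamma function `ψ = (log ∘ Γ)'`. -/
noncomputable def digamma (x : ℝ) : ℝ := deriv (fun y => Real.log (Real.Gamma y)) x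

/-- The constant `C_N = N^{φ(N)} ∏_{p ∣ N} p^{φ(N)/(p-1)}`. -/
def paperC (N : ℕ) : ℕ := N ^ N.totient * ∏ p ∈ N.primeFactors, p ^ (N.totient / (p - 1))

/-- The totatives of `N` in `{1,…,N}`. -/
def totSet (N : ℕ) : Finset ℕ := (Finset.Icc 1 N).filter (fun r => Nat.Coprime r N)


-- Harmonic in ℝ
noncomputable def H (n : ℕ) : ℝ := (harmonic n : ℝ)

lemma H_eq (n : ℕ) : H n = ∑ i ∈ range n, (1:ℝ)/(i+1) := by
  simp only [H, harmonic, Rat.cast_sum, one_div]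
  push_cast
  rfl

-- digamma basics
lemma diffAt_logGamma {x : ℝ} (hx : 0 < x) :
    DifferentiableAt ℝ (fun y => Real.log (Real.Gamma y)) x :=
  (Real.differentiableAt_Gamma (fun m => ((neg_nonpos.mpr m.cast_nonneg).trans_lt hx).ne')).log
    (Real.Gamma_ne_zero (fun m => ((neg_nonpos.mpr m.cast_nonneg).trans_lt hx).ne'))

lemma digamma_one : digamma 1 = -Real.eulerMascheroniConstant := by
  rw [digamma, deriv.log (Real.differentiableAt_Gamma (fun m => ((neg_nonpos.mpr m.cast_nonneg).trans_lt one_pos).ne')) (by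
    rw [Real.Gamma_one]; norm_num), Real.Gamma_one, div_one,
    Real.eulerMascheroniConstant_eq_neg_deriv, neg_neg]

lemma digamma_rec {x : ℝ} (hx : 0 < x) : digamma (x + 1) = digamma x + 1/x := by
  rw [digamma, digamma, ← deriv_comp_add_const, one_div, ← Real.deriv_log,
    ← deriv_add (diffAt_logGamma hx) (Real.differentiableAt_log hx.ne')]
  apply Filter.EventuallyEq.deriv_eq
  filter_upwards [eventually_gt_nhds hx] with y hy
  rw [Real.Gamma_add_one hy.ne', Real.log_mul hy.ne' (Real.Gamma_pos_of_pos hy).ne', add_comm]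
  rfl

lemma digamma_nat (n : ℕ) : digamma (n + 1) = -Real.eulerMascheroniConstant + H n := by
  induction n with
  | zero => simp [digamma_one, H]
  | succ n ih =>
      have h : ((n+1 : ℕ) : ℝ) + 1 = ((n : ℝ) + 1) + 1 := by push_cast; ring
      rw [h, digamma_rec (by positivity), ih]
      simp only [H, harmonic_succ]
      push_cast
      ring

lemma digamma_mono : MonotoneOn digamma (Set.Ioi 0) := by
  have h := Real.convexOn_log_Gamma.monotoneOn_deriv (fun x hx => diffAt_logGamma hx)
  rw [Function.comp_def] at h
  exact h

lemma digamma_add_nat {x : ℝ} (hx : 0 < x) (n : ℕ) :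
    digamma (x + n) = digamma x + ∑ m ∈ range n, 1/(x + m) := by
  induction n with
  | zero => simp
  | succ n ih =>
      have h : x + ((n+1 : ℕ) : ℝ) = (x + n) + 1 := by push_cast; ring
      rw [h, digamma_rec (by positivity), ih, Finset.sum_range_succ]
      ring

/-- key analytic limit -/
lemma tendsto_digamma_diff {x : ℝ} (hx : 0 < x) (hx1 : x ≤ 1) :
    Tendsto (fun n : ℕ => (∑ m ∈ range n, 1/(x + m)) - H n) atTop
      (𝓝 (digamma 1 - digamma x)) := by
  have key : ∀ n : ℕ, 1 ≤ n →
      0 ≤ (digamma 1 - digamma x) - ((∑ m ∈ range n, 1/(x + m)) - H n) ∧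
      (digamma 1 - digamma x) - ((∑ m ∈ range n, 1/(x + m)) - H n) ≤ 1/n := by
    intro n hn
    obtain ⟨m, rfl⟩ := Nat.exists_eq_add_of_le hn
    set n := 1 + m with hndef
    have hn0 : (0:ℝ) < n := by exact_mod_cast hn
    have hxn : (0:ℝ) < x + n := by positivity
    have hd : digamma x = digamma (x + n) - ∑ m ∈ range n, 1/(x + m) := by
      rw [digamma_add_nat hx n]; ring
    have hub : digamma (x + n) ≤ -Real.eulerMascheroniConstant + H n := by
      rw [← digamma_nat n]
      refine digamma_mono (Set.mem_Ioi.mpr hxn) (Set.mem_Ioi.mpr (by linarith)) (by linarith)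
    have hlb : -Real.eulerMascheroniConstant + H m ≤ digamma (x + n) := by
      have hcast : ((m : ℝ) + 1) = (n : ℝ) := by push_cast [hndef]; ring
      rw [← digamma_nat m, hcast]
      refine digamma_mono (Set.mem_Ioi.mpr hn0) (Set.mem_Ioi.mpr hxn) (by linarith)
    have hH : H n = H m + 1/n := by
      rw [hndef, Nat.add_comm 1 m, H, H, harmonic_succ]
      push_cast; ring
    rw [digamma_one, hd]
    constructor <;> [nlinarith; nlinarith]
  have h0 : Tendsto (fun n : ℕ =>
      (digamma 1 - digamma x) - ((∑ m ∈ range n, 1/(x + m)) - H n)) atTop (𝓝 0) := by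
    apply squeeze_zero'
    · filter_upwards [eventually_ge_atTop 1] with n hn using (key n hn).1
    · filter_upwards [eventually_ge_atTop 1] with n hn using (key n hn).2
    · exact tendsto_one_div_atTop_nhds_zero_nat
  have h1 := (tendsto_const_nhds :
      Tendsto (fun _ : ℕ => digamma 1 - digamma x) atTop (𝓝 (digamma 1 - digamma x))).sub h0
  simpa using h1

-- ## Number theory part

def rad (N : ℕ) : ℕ := ∏ p ∈ N.primeFactors, p

lemma squarefree_prod_primes {s : Finset ℕ} (hs : ∀ p ∈ s, p.Prime) :
    Squarefree (∏ p ∈ s, p) := by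
  induction s using Finset.induction with
  | empty => simp only [Finset.prod_empty]; exact squarefree_one
  | @insert a s ha ih =>
      rw [Finset.prod_insert ha]
      have hp := hs a (Finset.mem_insert_self a s)
      have hcop : Nat.Coprime a (∏ q ∈ s, q) :=
        Nat.Coprime.prod_right fun q hq =>
          (Nat.coprime_primes hp (hs q (Finset.mem_insert_of_mem hq))).mpr
            (fun h => ha (h ▸ hq))
      exact (Nat.squarefree_mul hcop).mpr
        ⟨hp.squarefree, ih fun q hq => hs q (Finset.mem_insert_of_mem hq)⟩

lemma squarefree_rad (N : ℕ) : Squarefree (rad N) :=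
  squarefree_prod_primes fun _ hp => Nat.prime_of_mem_primeFactors hp

lemma rad_ne_zero (N : ℕ) : rad N ≠ 0 := (squarefree_rad N).ne_zero

lemma primeFactors_rad (N : ℕ) : (rad N).primeFactors = N.primeFactors :=
  Nat.primeFactors_prod fun _ hp => Nat.prime_of_mem_primeFactors hp

lemma rad_dvd (N : ℕ) : rad N ∣ N := Nat.prod_primeFactors_dvd N

lemma coprime_rad_iff {N s : ℕ} (hN : N ≠ 0) (hs : s ≠ 0) :
    Nat.Coprime (rad N) s ↔ Nat.Coprime N s := by
  rw [← Nat.disjoint_primeFactors (rad_ne_zero N) hs, ← Nat.disjoint_primeFactors hN hs,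
    primeFactors_rad]

-- totSet card
lemma totSet_card {N : ℕ} (hN : 2 ≤ N) : (totSet N).card = N.totient := by
  rw [Nat.totient_eq_card_coprime]
  congr 1
  ext a
  simp only [totSet, Finset.mem_filter, Finset.mem_Icc, Finset.mem_range]
  constructor
  · rintro ⟨⟨h1, h2⟩, hc⟩
    refine ⟨lt_of_le_of_ne h2 fun h => ?_, Nat.coprime_comm.mp hc⟩
    subst h
    have : a = 1 := by simpa [Nat.Coprime] using hc
    omega
  · rintro ⟨h1, hc⟩
    have ha : a ≠ 0 := by
      rintro rfl
      have : N = 1 := by simpa [Nat.Coprime] using hc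
      omega
    exact ⟨⟨Nat.one_le_iff_ne_zero.mpr ha, le_of_lt h1⟩, Nat.coprime_comm.mp hc⟩

-- reindexing the double sum
lemma sum_totSet_range {N : ℕ} (hN : 2 ≤ N) (n : ℕ) (f : ℕ → ℝ) :
    ∑ r ∈ totSet N, ∑ m ∈ range n, f (r + m * N)
      = ∑ s ∈ (Icc 1 (n * N)).filter (fun s => s.Coprime N), f s := by
  have hN0 : 0 < N := by omega
  rw [← Finset.sum_product']
  refine Finset.sum_nbij' (fun p => p.1 + p.2 * N) (fun s => (s % N, s / N)) ?_ ?_ ?_ ?_ ?_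
  · rintro ⟨r, m⟩ hp
    simp only [Finset.mem_product, totSet, Finset.mem_filter, Finset.mem_Icc,
      Finset.mem_range] at hp
    obtain ⟨⟨⟨hr1, hrN⟩, hrc⟩, hm⟩ := hp
    simp only [Finset.mem_filter, Finset.mem_Icc]
    refine ⟨⟨by omega, ?_⟩, (Nat.coprime_add_mul_right_left r N m).mpr hrc⟩
    calc r + m * N ≤ N + m * N := by omega
    _ = (m + 1) * N := by ring
    _ ≤ n * N := Nat.mul_le_mul_right N (by omega)
  · intro s hs
    simp only [Finset.mem_filter, Finset.mem_Icc] at hs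
    obtain ⟨⟨hs1, hsM⟩, hsc⟩ := hs
    have hmod : ¬ (N ∣ s) := by
      intro hdvd
      have h1 : N ∣ Nat.gcd s N := Nat.dvd_gcd hdvd dvd_rfl
      rw [hsc] at h1
      have := Nat.le_of_dvd one_pos h1
      omega
    have hmod0 : s % N ≠ 0 := fun h => hmod (Nat.dvd_of_mod_eq_zero h)
    simp only [Finset.mem_product, totSet, Finset.mem_filter, Finset.mem_Icc, Finset.mem_range]
    refine ⟨⟨⟨by omega, le_of_lt (Nat.mod_lt s hN0)⟩, ?_⟩, ?_⟩
    · have : Nat.gcd N s = Nat.gcd (s % N) N := Nat.gcd_rec N s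
      unfold Nat.Coprime
      rw [← this]
      exact Nat.coprime_comm.mp hsc
    · rw [Nat.div_lt_iff_lt_mul hN0]
      rcases lt_or_eq_of_le hsM with h | h
      · exact h
      · exact absurd (h ▸ dvd_mul_left N n) hmod
  · rintro ⟨r, m⟩ hp
    simp only [Finset.mem_product, totSet, Finset.mem_filter, Finset.mem_Icc,
      Finset.mem_range] at hp
    obtain ⟨⟨⟨hr1, hrN⟩, hrc⟩, hm⟩ := hp
    have hrlt : r < N := by
      rcases lt_or_eq_of_le hrN with h | h
      · exact h
      · subst h
        have : r = 1 := by simpa [Nat.Coprime] using hrc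
        omega
    have h1 : (r + m * N) % N = r := by
      rw [Nat.add_mul_mod_self_right, Nat.mod_eq_of_lt hrlt]
    have h2 : (r + m * N) / N = m := by
      rw [Nat.add_mul_div_right _ _ hN0, Nat.div_eq_of_lt hrlt, zero_add]
    simp [h1, h2]
  · intro s hs
    exact Nat.mod_add_div' s N
  · intro p hp
    rfl

lemma sum_Icc_one_eq_H (K : ℕ) : ∑ t ∈ Icc 1 K, (1:ℝ)/t = H K := by
  induction K with
  | zero => simp [H_eq]
  | succ K ih =>
      rw [Finset.sum_Icc_succ_top (by omega), ih, H_eq, H_eq, Finset.sum_range_succ]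
      push_cast
      ring

-- Möbius machinery
lemma sum_mu_divisors (m : ℕ) : ∑ d ∈ m.divisors, (μ d : ℝ) = if m = 1 then 1 else 0 := by
  have h := congrArg (fun f : ArithmeticFunction ℤ => f m) moebius_mul_coe_zeta
  simp only [coe_mul_zeta_apply, one_apply] at h
  have : ((∑ d ∈ m.divisors, μ d : ℤ) : ℝ) = ((if m = 1 then 1 else 0 : ℤ) : ℝ) := by
    exact_mod_cast congrArg (fun z : ℤ => (z : ℝ)) h
  push_cast at this
  simpa using this

lemma filter_divisors_dvd {Q s : ℕ} (hQ : Q ≠ 0) (hs : s ≠ 0) :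
    Q.divisors.filter (· ∣ s) = (Nat.gcd Q s).divisors := by
  ext d
  simp only [Finset.mem_filter, Nat.mem_divisors]
  constructor
  · rintro ⟨⟨h1, -⟩, h2⟩
    exact ⟨Nat.dvd_gcd h1 h2, Nat.gcd_ne_zero_left hQ⟩
  · rintro ⟨h, -⟩
    exact ⟨⟨(Nat.dvd_gcd_iff.mp h).1, hQ⟩, (Nat.dvd_gcd_iff.mp h).2⟩

lemma indicator_coprime {N s : ℕ} (hN : 2 ≤ N) (hs : s ≠ 0) :
    (if s.Coprime N then (1:ℝ) else 0)
      = ∑ d ∈ (rad N).divisors, (if d ∣ s then (μ d : ℝ) else 0) := by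
  rw [← Finset.sum_filter, filter_divisors_dvd (rad_ne_zero N) hs, sum_mu_divisors]
  congr 1
  rw [eq_iff_iff]
  constructor
  · intro h
    exact ((coprime_rad_iff (by omega) hs).mpr (Nat.coprime_comm.mp h) : Nat.Coprime (rad N) s)
  · intro h
    exact Nat.coprime_comm.mp ((coprime_rad_iff (by omega) hs).mp h)

-- the inverse arithmetic function
noncomputable def finv : ArithmeticFunction ℝ := ⟨fun d => (d : ℝ)⁻¹, by simp⟩

lemma finv_apply (d : ℕ) : finv d = (d : ℝ)⁻¹ := rfl

lemma finv_mult : finv.IsMultiplicative := by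
  refine ⟨by simp [finv_apply], fun {m n} _ => ?_⟩
  simp only [finv_apply]
  push_cast
  rw [mul_inv]

lemma sum_moebius_inv {s : Finset ℕ} (hs : ∀ p ∈ s, p.Prime) :
    ∑ d ∈ (∏ p ∈ s, p).divisors, (μ d : ℝ) * (d : ℝ)⁻¹ = ∏ p ∈ s, (1 - (p : ℝ)⁻¹) := by
  have h := ArithmeticFunction.IsMultiplicative.prodPrimeFactors_one_sub_of_squarefree
    finv finv_mult (squarefree_prod_primes hs)
  rw [Nat.primeFactors_prod hs] at h
  simp only [finv_apply] at h
  exact h.symm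

lemma sum_div_filter {d M : ℕ} (hd : 0 < d) (hdM : d ∣ M) :
    ∑ s ∈ (Icc 1 M).filter (fun s => d ∣ s), (1:ℝ)/s = (d:ℝ)⁻¹ * H (M / d) := by
  rw [← sum_Icc_one_eq_H, Finset.mul_sum]
  refine (Finset.sum_nbij' (fun s => s / d) (fun t => d * t) ?_ ?_ ?_ ?_ ?_)
  · intro s hs
    simp only [Finset.mem_filter, Finset.mem_Icc] at hs ⊢
    obtain ⟨⟨h1, h2⟩, hdvd⟩ := hs
    exact ⟨Nat.one_le_div_iff hd |>.mpr (Nat.le_of_dvd (by omega) hdvd),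
      Nat.div_le_div_right h2⟩
  · intro t ht
    simp only [Finset.mem_Icc] at ht
    simp only [Finset.mem_filter, Finset.mem_Icc]
    refine ⟨⟨by nlinarith [ht.1], ?_⟩, Dvd.intro t rfl⟩
    calc d * t ≤ d * (M / d) := Nat.mul_le_mul_left d ht.2
    _ = M := Nat.mul_div_cancel' hdM
  · intro s hs
    simp only [Finset.mem_filter] at hs
    exact Nat.mul_div_cancel' hs.2
  · intro t _
    exact Nat.mul_div_cancel_left t hd
  · intro s hs
    simp only [Finset.mem_filter, Finset.mem_Icc] at hs
    obtain ⟨⟨h1, h2⟩, hdvd⟩ := hs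
    obtain ⟨t, rfl⟩ := hdvd
    have ht0 : 0 < t := by
      rcases Nat.eq_zero_or_pos t with h | h
      · subst h; omega
      · exact h
    show 1 / ((d * t : ℕ) : ℝ) = (d:ℝ)⁻¹ * (1 / ((d * t / d : ℕ) : ℝ))
    rw [Nat.mul_div_cancel_left t hd]
    have hc : ((d * t : ℕ) : ℝ) = (d : ℝ) * t := by push_cast; ring
    rw [hc, one_div, one_div, mul_inv]

lemma sum_coprime_inv {N : ℕ} (hN : 2 ≤ N) {M : ℕ} (hM : N ∣ M) :
    ∑ s ∈ (Icc 1 M).filter (fun s => s.Coprime N), (1:ℝ)/s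
      = ∑ d ∈ (rad N).divisors, (μ d : ℝ) * ((d:ℝ)⁻¹ * H (M / d)) := by
  rw [Finset.sum_filter]
  have hstep : ∀ s ∈ Icc 1 M, (if s.Coprime N then (1:ℝ)/s else 0)
      = ∑ d ∈ (rad N).divisors, (if d ∣ s then (μ d : ℝ)/s else 0) := by
    intro s hs
    simp only [Finset.mem_Icc] at hs
    have hs0 : s ≠ 0 := by omega
    calc (if s.Coprime N then (1:ℝ)/s else 0)
        = (if s.Coprime N then (1:ℝ) else 0) * (1/s) := by split <;> simp
      _ = (∑ d ∈ (rad N).divisors, (if d ∣ s then (μ d : ℝ) else 0)) * (1/s) := by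
          rw [← indicator_coprime hN hs0]
      _ = ∑ d ∈ (rad N).divisors, (if d ∣ s then (μ d : ℝ)/s else 0) := by
          rw [Finset.sum_mul]
          refine Finset.sum_congr rfl fun d _ => ?_
          split <;> simp [div_eq_mul_inv, one_div]
  rw [Finset.sum_congr rfl hstep, Finset.sum_comm]
  refine Finset.sum_congr rfl fun d hd => ?_
  have hd0 : 0 < d := Nat.pos_of_mem_divisors hd
  have hdM : d ∣ M := (Nat.dvd_of_mem_divisors hd).trans ((rad_dvd N).trans hM)
  rw [← Finset.sum_filter, ← sum_div_filter hd0 hdM, Finset.mul_sum]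
  refine Finset.sum_congr rfl fun s _ => ?_
  rw [div_eq_mul_inv, one_div]

lemma totient_real (N : ℕ) :
    (N.totient : ℝ) = N * ∏ p ∈ N.primeFactors, (1 - (p:ℝ)⁻¹) := by
  have h := Nat.totient_eq_mul_prod_factors N
  have h2 : ((N.totient : ℚ) : ℝ) = ((N * ∏ p ∈ N.primeFactors, (1 - (p:ℚ)⁻¹) : ℚ) : ℝ) := by
    exact_mod_cast congrArg (fun q : ℚ => (q : ℝ)) h
  push_cast at h2
  exact_mod_cast h2

lemma coeff_A {N : ℕ} (hN : 2 ≤ N) :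
    ∑ d ∈ (rad N).divisors, (μ d : ℝ) * ((N:ℝ)/d) = N.totient := by
  have : ∑ d ∈ (rad N).divisors, (μ d : ℝ) * ((N:ℝ)/d)
      = (N:ℝ) * ∑ d ∈ (rad N).divisors, (μ d : ℝ) * (d:ℝ)⁻¹ := by
    rw [Finset.mul_sum]
    refine Finset.sum_congr rfl fun d _ => ?_
    rw [div_eq_mul_inv]; ring
  rw [this]
  unfold rad
  rw [sum_moebius_inv (fun p hp => Nat.prime_of_mem_primeFactors hp)]
  exact (totient_real N).symm

lemma sum_mu_p {N p : ℕ} (hN : 2 ≤ N) (hp : p ∈ N.primeFactors) :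
    ∑ d ∈ (rad N).divisors.filter (fun d => p ∣ d), (μ d : ℝ) * (d:ℝ)⁻¹
      = -((p:ℝ)⁻¹ * ∏ q ∈ N.primeFactors.erase p, (1 - (q:ℝ)⁻¹)) := by
  set Q' := ∏ q ∈ N.primeFactors.erase p, q with hQ'def
  have hpp : p.Prime := Nat.prime_of_mem_primeFactors hp
  have hprimes' : ∀ q ∈ N.primeFactors.erase p, q.Prime := fun q hq =>
    Nat.prime_of_mem_primeFactors (Finset.mem_of_mem_erase hq)
  have hQ'0 : Q' ≠ 0 := (squarefree_prod_primes hprimes').ne_zero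
  have hQQ : rad N = p * Q' := (Finset.mul_prod_erase _ _ hp).symm
  have hcop : Nat.Coprime p Q' := Nat.Coprime.prod_right fun q hq =>
    (Nat.coprime_primes hpp (hprimes' q hq)).mpr (Finset.ne_of_mem_erase hq).symm
  have hp0 : p ≠ 0 := hpp.ne_zero
  have key : ∑ d ∈ (rad N).divisors.filter (fun d => p ∣ d), (μ d : ℝ) * (d:ℝ)⁻¹
      = ∑ e ∈ Q'.divisors, (μ (p * e) : ℝ) * ((p * e : ℕ):ℝ)⁻¹ := by
    refine Finset.sum_nbij' (fun d => d / p) (fun e => p * e) ?_ ?_ ?_ ?_ ?_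
    · intro d hd
      simp only [Finset.mem_filter, Nat.mem_divisors] at hd
      obtain ⟨⟨hdvd, -⟩, hpd⟩ := hd
      obtain ⟨e, rfl⟩ := hpd
      show p * e / p ∈ Q'.divisors
      rw [Nat.mul_div_cancel_left e (Nat.pos_of_ne_zero hp0)]
      rw [hQQ] at hdvd
      exact Nat.mem_divisors.mpr ⟨(mul_dvd_mul_iff_left hp0).mp hdvd, hQ'0⟩
    · intro e he
      simp only [Nat.mem_divisors] at he
      simp only [Finset.mem_filter, Nat.mem_divisors]
      exact ⟨⟨hQQ ▸ mul_dvd_mul_left p he.1, (rad_ne_zero N)⟩, dvd_mul_right p e⟩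
    · intro d hd
      simp only [Finset.mem_filter] at hd
      exact Nat.mul_div_cancel' hd.2
    · intro e _
      exact Nat.mul_div_cancel_left e (Nat.pos_of_ne_zero hp0)
    · intro d hd
      simp only [Finset.mem_filter] at hd
      rw [Nat.mul_div_cancel' hd.2]
  rw [key]
  have hterm : ∀ e ∈ Q'.divisors, (μ (p * e) : ℝ) * ((p * e : ℕ):ℝ)⁻¹
      = -((p:ℝ)⁻¹ * ((μ e : ℝ) * (e:ℝ)⁻¹)) := by
    intro e he
    have hce : Nat.Coprime p e := Nat.Coprime.coprime_dvd_right (Nat.dvd_of_mem_divisors he) hcop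
    have hmu : μ (p * e) = μ p * μ e := isMultiplicative_moebius.map_mul_of_coprime hce
    rw [hmu, moebius_apply_prime hpp]
    push_cast
    rw [mul_inv]
    ring
  rw [Finset.sum_congr rfl hterm, Finset.sum_neg_distrib, ← Finset.mul_sum, hQ'def]
  rw [sum_moebius_inv hprimes']

lemma pred_dvd_totient {N p : ℕ} (hN : 2 ≤ N) (hp : p ∈ N.primeFactors) :
    (p - 1) ∣ N.totient := by
  have hpp : p.Prime := Nat.prime_of_mem_primeFactors hp
  have hN0 : N ≠ 0 := by omega
  have hdvd : p ∣ N := Nat.dvd_of_mem_primeFactors hp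
  have ha : 0 < N.factorization p := hpp.factorization_pos_of_dvd hN0 hdvd
  have hsplit : p ^ N.factorization p * (N / p ^ N.factorization p) = N :=
    Nat.ordProj_mul_ordCompl_eq_self N p
  have hcop : Nat.Coprime (p ^ N.factorization p) (N / p ^ N.factorization p) :=
    Nat.Coprime.pow_left _ (Nat.coprime_ordCompl hpp hN0)
  have h1 : N.totient = (p ^ N.factorization p).totient * (N / p ^ N.factorization p).totient := by
    rw [← Nat.totient_mul hcop, hsplit]
  rw [h1, Nat.totient_prime_pow hpp ha]
  exact ⟨p ^ (N.factorization p - 1) * (N / p ^ N.factorization p).totient, by ring⟩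

lemma cast_totient_div_pred {N p : ℕ} (hN : 2 ≤ N) (hp : p ∈ N.primeFactors) :
    ((N.totient / (p - 1) : ℕ) : ℝ) = (N.totient : ℝ) / ((p : ℝ) - 1) := by
  have hpp : p.Prime := Nat.prime_of_mem_primeFactors hp
  have h2 : 2 ≤ p := hpp.two_le
  have hc : ((p - 1 : ℕ) : ℝ) = (p : ℝ) - 1 := by
    rw [Nat.cast_sub (by omega), Nat.cast_one]
  have hne : ((p - 1 : ℕ) : ℝ) ≠ 0 := by
    rw [hc]
    have : (2:ℝ) ≤ p := by exact_mod_cast h2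
    linarith
  rw [Nat.cast_div (pred_dvd_totient hN hp) hne, hc]

-- value of φ(N)/(p-1) as a real product
lemma totient_div_pred_eq {N p : ℕ} (hN : 2 ≤ N) (hp : p ∈ N.primeFactors) :
    (N.totient : ℝ) / ((p : ℝ) - 1)
      = (N : ℝ) * ((p:ℝ)⁻¹ * ∏ q ∈ N.primeFactors.erase p, (1 - (q:ℝ)⁻¹)) := by
  have hpp : p.Prime := Nat.prime_of_mem_primeFactors hp
  have hp2 : (2:ℝ) ≤ p := by exact_mod_cast hpp.two_le
  have hsplit : ∏ q ∈ N.primeFactors, (1 - (q:ℝ)⁻¹)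
      = (1 - (p:ℝ)⁻¹) * ∏ q ∈ N.primeFactors.erase p, (1 - (q:ℝ)⁻¹) :=
    (Finset.mul_prod_erase _ _ hp).symm
  have hp0 : (p:ℝ) ≠ 0 := by linarith
  have hne : (p:ℝ) - 1 ≠ 0 := by linarith
  have hkey : 1 - (p:ℝ)⁻¹ = (p:ℝ)⁻¹ * ((p:ℝ) - 1) := by field_simp
  rw [totient_real, hsplit, hkey, div_eq_iff hne]
  ring

lemma log_paperC {N : ℕ} (hN : 2 ≤ N) :
    Real.log (paperC N)
      = (N.totient : ℝ) * Real.log N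
        + ∑ q ∈ N.primeFactors, ((N.totient : ℝ) / ((q:ℝ) - 1)) * Real.log q := by
  have hNpos : (0:ℝ) < N := by exact_mod_cast (by omega : 0 < N)
  have hprod_pos : 0 < ∏ p ∈ N.primeFactors, p ^ (N.totient / (p - 1)) :=
    Finset.prod_pos fun p hp => pow_pos (Nat.prime_of_mem_primeFactors hp).pos _
  have h1 : (paperC N : ℝ)
      = (N:ℝ) ^ N.totient * ∏ p ∈ N.primeFactors, (p:ℝ) ^ (N.totient / (p - 1)) := by
    rw [paperC]
    push_cast
    rfl
  rw [h1, Real.log_mul (by positivity) (by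
      refine (Finset.prod_pos fun p hp => ?_).ne'
      exact pow_pos (by exact_mod_cast (Nat.prime_of_mem_primeFactors hp).pos) _),
    Real.log_pow, Real.log_prod (fun p hp => by
      exact (pow_pos (by exact_mod_cast (Nat.prime_of_mem_primeFactors hp).pos) _).ne')]
  congr 1
  refine Finset.sum_congr rfl fun p hp => ?_
  rw [Real.log_pow, cast_totient_div_pred hN hp]

lemma arith_identity {N : ℕ} (hN : 2 ≤ N) :
    ∑ d ∈ (rad N).divisors, (μ d : ℝ) * ((N:ℝ)/(d:ℝ)) * Real.log ((N:ℝ)/(d:ℝ))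
      = Real.log (paperC N) := by
  have hN0 : (N:ℝ) ≠ 0 := by
    have : (0:ℝ) < N := by exact_mod_cast (by omega : 0 < N)
    exact this.ne'
  have hsplit : ∀ d ∈ (rad N).divisors,
      (μ d : ℝ) * ((N:ℝ)/(d:ℝ)) * Real.log ((N:ℝ)/(d:ℝ))
        = (μ d : ℝ) * ((N:ℝ)/(d:ℝ)) * Real.log N
          - (N:ℝ) * ((μ d : ℝ) * (d:ℝ)⁻¹ * Real.log d) := by
    intro d hd
    have hd0 : (d:ℝ) ≠ 0 := by
      have : 0 < d := Nat.pos_of_mem_divisors hd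
      exact_mod_cast this.ne'
    rw [Real.log_div hN0 hd0]
    field_simp
  rw [Finset.sum_congr rfl hsplit, Finset.sum_sub_distrib, ← Finset.sum_mul, coeff_A hN,
    ← Finset.mul_sum]
  -- now handle B = ∑ μd d⁻¹ log d
  have hlogd : ∀ d ∈ (rad N).divisors,
      (μ d : ℝ) * (d:ℝ)⁻¹ * Real.log d
        = ∑ q ∈ N.primeFactors, (if q ∣ d then (μ d : ℝ) * (d:ℝ)⁻¹ * Real.log q else 0) := by
    intro d hd
    have hdvd : d ∣ rad N := Nat.dvd_of_mem_divisors hd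
    have hd0 : d ≠ 0 := (Nat.pos_of_mem_divisors hd).ne'
    have hsq : Squarefree d := (squarefree_rad N).squarefree_of_dvd hdvd
    have hpf : d.primeFactors = N.primeFactors.filter (· ∣ d) := by
      ext q
      simp only [Nat.mem_primeFactors, Finset.mem_filter]
      constructor
      · rintro ⟨hq, hqd, -⟩
        exact ⟨⟨hq, hqd.trans (hdvd.trans (rad_dvd N)), by omega⟩, hqd⟩
      · rintro ⟨⟨hq, -, -⟩, hqd⟩
        exact ⟨hq, hqd, hd0⟩
    have hlog : Real.log d = ∑ q ∈ d.primeFactors, Real.log q := by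
      conv_lhs => rw [← Nat.prod_primeFactors_of_squarefree hsq]
      rw [Nat.cast_prod, Real.log_prod]
      intro q hq
      have := (Nat.prime_of_mem_primeFactors hq).pos
      exact_mod_cast this.ne'
    rw [hlog, hpf, Finset.sum_filter, Finset.mul_sum]
    refine Finset.sum_congr rfl fun q _ => ?_
    split <;> simp
  rw [Finset.sum_congr rfl hlogd, Finset.sum_comm]
  have hinner : ∀ q ∈ N.primeFactors,
      ∑ d ∈ (rad N).divisors, (if q ∣ d then (μ d : ℝ) * (d:ℝ)⁻¹ * Real.log q else 0)
        = -((q:ℝ)⁻¹ * ∏ r ∈ N.primeFactors.erase q, (1 - (r:ℝ)⁻¹)) * Real.log q := by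
    intro q hq
    rw [← Finset.sum_filter, ← sum_mu_p hN hq, Finset.sum_mul]
  rw [Finset.sum_congr rfl hinner, log_paperC hN]
  have : ∀ q ∈ N.primeFactors,
      (N:ℝ) * (-((q:ℝ)⁻¹ * ∏ r ∈ N.primeFactors.erase q, (1 - (r:ℝ)⁻¹)) * Real.log q)
        = -(((N.totient : ℝ) / ((q:ℝ) - 1)) * Real.log q) := by
    intro q hq
    rw [totient_div_pred_eq hN hq]
    ring
  rw [Finset.mul_sum, Finset.sum_congr rfl this, Finset.sum_neg_distrib]
  ring

lemma tendsto_H_mul_sub {c : ℕ} (hc : 1 ≤ c) :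
    Tendsto (fun n : ℕ => H (n * c) - H n) atTop (𝓝 (Real.log c)) := by
  have hmul : Tendsto (fun n : ℕ => n * c) atTop atTop :=
    tendsto_atTop_mono (fun n => Nat.le_mul_of_pos_right n (by omega)) tendsto_id
  have h1 := Real.tendsto_harmonic_sub_log
  have h2 := h1.comp hmul
  have h3 := (h2.sub h1).add (tendsto_const_nhds (α := ℕ) (x := Real.log c))
  rw [sub_self, zero_add] at h3
  apply h3.congr'
  filter_upwards [eventually_ge_atTop 1] with n hn
  have hn0 : (n:ℝ) ≠ 0 := by
    have : (0:ℝ) < n := by exact_mod_cast hn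
    exact this.ne'
  have hc0 : (c:ℝ) ≠ 0 := by
    have : (0:ℝ) < c := by exact_mod_cast hc
    exact this.ne'
  show (harmonic (n*c) : ℝ) - Real.log ((n*c : ℕ) : ℝ) - ((harmonic n : ℝ) - Real.log n)
      + Real.log c = H (n * c) - H n
  rw [Nat.cast_mul, Real.log_mul hn0 hc0, H, H]
  ring

lemma tendsto_inner {N : ℕ} (hN : 2 ≤ N) :
    Tendsto (fun n : ℕ => ∑ r ∈ totSet N, ((∑ m ∈ range n, 1/((r:ℝ)/N + m)) - H n))
      atTop (𝓝 (Real.log (paperC N))) := by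
  have hN0 : (0:ℝ) < N := by exact_mod_cast (by omega : 0 < N)
  have hfun : ∀ n : ℕ, ∑ r ∈ totSet N, ((∑ m ∈ range n, 1/((r:ℝ)/N + m)) - H n)
      = ∑ d ∈ (rad N).divisors, (μ d : ℝ) * ((N:ℝ)/(d:ℝ)) * (H (n * (N / d)) - H n) := by
    intro n
    rw [Finset.sum_sub_distrib, Finset.sum_const, totSet_card hN]
    have hterm : ∀ r ∈ totSet N, ∑ m ∈ range n, 1/((r:ℝ)/N + m)
        = ∑ m ∈ range n, (N:ℝ)/((r + m * N : ℕ) : ℝ) := by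
      intro r hr
      simp only [totSet, Finset.mem_filter, Finset.mem_Icc] at hr
      have hr1 : (0:ℝ) < r := by exact_mod_cast hr.1.1
      refine Finset.sum_congr rfl fun m _ => ?_
      have hx : (r:ℝ)/N + m = ((r + m * N : ℕ) : ℝ)/(N:ℝ) := by
        push_cast
        field_simp
      rw [hx, one_div, inv_div]
    rw [Finset.sum_congr rfl hterm, sum_totSet_range hN n (fun s => (N:ℝ)/(s:ℝ))]
    have : ∑ s ∈ (Icc 1 (n * N)).filter (fun s => s.Coprime N), (N:ℝ)/(s:ℝ)
        = (N:ℝ) * ∑ s ∈ (Icc 1 (n * N)).filter (fun s => s.Coprime N), (1:ℝ)/s := by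
      rw [Finset.mul_sum]
      refine Finset.sum_congr rfl fun s _ => ?_
      rw [mul_one_div]
    rw [this, sum_coprime_inv hN (dvd_mul_left N n), Finset.mul_sum, nsmul_eq_mul]
    rw [← coeff_A hN, Finset.sum_mul, ← Finset.sum_sub_distrib]
    refine Finset.sum_congr rfl fun d hd => ?_
    have hdN : d ∣ N := (Nat.dvd_of_mem_divisors hd).trans (rad_dvd N)
    have hnd : n * N / d = n * (N / d) := Nat.mul_div_assoc n hdN
    rw [hnd]
    ring
  refine Tendsto.congr (fun n => (hfun n).symm) ?_
  rw [← arith_identity hN]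
  refine tendsto_finset_sum _ fun d hd => ?_
  have hdN : d ∣ N := (Nat.dvd_of_mem_divisors hd).trans (rad_dvd N)
  have hd0 : 0 < d := Nat.pos_of_mem_divisors hd
  have hc : 1 ≤ N / d := (Nat.one_le_div_iff hd0).mpr (Nat.le_of_dvd (by omega) hdN)
  have hcast : ((N / d : ℕ) : ℝ) = (N:ℝ)/(d:ℝ) := by
    rw [Nat.cast_div hdN (by exact_mod_cast hd0.ne')]
  have := (tendsto_H_mul_sub hc).const_mul ((μ d : ℝ) * ((N:ℝ)/(d:ℝ)))
  rw [hcast] at this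
  exact this

/-- For `N_1, …, N_k ≥ 2`,
`∑_j ∑_i (ψ(1) − ψ(r_{i,j}/N_j)) = log C_N` where `C_N = ∏_j C_{N_j}`. -/
theorem digamma_sum_eq_logC {k : ℕ} (N : Fin k → ℕ) (hN : ∀ j, 2 ≤ N j) :
    ∑ j : Fin k, ∑ r ∈ totSet (N j), (digamma 1 - digamma ((r : ℝ) / (N j)))
      = Real.log (∏ j : Fin k, (paperC (N j) : ℝ)) := by
  have hpos : ∀ j : Fin k, (0:ℝ) < (paperC (N j) : ℝ) := by
    intro j
    have h2 : 2 ≤ N j := hN j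
    have : 0 < paperC (N j) := by
      rw [paperC]
      refine Nat.mul_pos (Nat.pow_pos (by omega)) (Finset.prod_pos fun p hp => ?_)
      exact Nat.pow_pos (Nat.prime_of_mem_primeFactors hp).pos
    exact_mod_cast this
  rw [Real.log_prod (fun j _ => (hpos j).ne')]
  refine Finset.sum_congr rfl fun j _ => ?_
  have h2 : 2 ≤ N j := hN j
  have hNpos : (0:ℝ) < (N j : ℝ) := by exact_mod_cast (by omega : 0 < N j)
  have hA : Tendsto (fun m : ℕ =>
      ∑ r ∈ totSet (N j), ((∑ i ∈ range m, 1/((r:ℝ)/(N j) + i)) - H m)) atTop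
      (𝓝 (∑ r ∈ totSet (N j), (digamma 1 - digamma ((r:ℝ)/(N j))))) := by
    refine tendsto_finset_sum _ fun r hr => ?_
    simp only [totSet, Finset.mem_filter, Finset.mem_Icc] at hr
    have hr1 : (0:ℝ) < (r:ℝ) := by exact_mod_cast hr.1.1
    have hx0 : (0:ℝ) < (r:ℝ)/(N j) := div_pos hr1 hNpos
    have hx1 : (r:ℝ)/(N j) ≤ 1 := by
      rw [div_le_one hNpos]
      exact_mod_cast hr.1.2
    exact tendsto_digamma_diff hx0 hx1
  exact tendsto_nhds_unique hA (tendsto_inner h2)
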